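/- For diagonal real matrices Λ, Δ, the maximum of Tr(ΛᵀPΔPᵀ) over P ∈ O(n) is attained at some permutation matrix P. -/

import Mathlib

open Matrix Finset

section aux
variable {n : ℕ} (a b : Fin n → ℝ)

/-- the linear functional -/
def gfun (a b : Fin n → ℝ) (M : Matrix (Fin n) (Fin n) ℝ) : ℝ :=
  ∑ i, ∑ j, a i * b j * M i j

lemma gfun_linear : IsLinearMap ℝ (gfun a b) := by
  constructor
  · intro M N
    simp [gfun, Matrix.add_apply, mul_add, Finset.sum_add_distrib]
  · intro c M
    simp [gfun, Matrix.smul_apply, Finset.mul_sum, smul_eq_mul]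
    congr 1; ext i; congr 1; ext j; ring

lemma trace_eq_gfun (Q : Matrix (Fin n) (Fin n) ℝ) :
    Matrix.trace ((Matrix.diagonal a)ᵀ * Q * Matrix.diagonal b * Qᵀ)
      = gfun a b (fun i j => (Q i j)^2) := by
  simp [Matrix.trace, gfun, Matrix.diag, Matrix.mul_apply, Matrix.diagonal_apply,
    Finset.sum_mul, Finset.mul_sum]
  congr 1; ext i; congr 1; ext j; ring

lemma sq_mem_doublyStochastic {Q : Matrix (Fin n) (Fin n) ℝ} (hQ : Qᵀ * Q = 1) :
    (fun i j => (Q i j)^2) ∈ doublyStochastic ℝ (Fin n) := by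
  have hQ' : Q * Qᵀ = 1 := mul_eq_one_comm.mpr hQ
  refine mem_doublyStochastic_iff_sum.mpr ?_
  refine ⟨fun i j => sq_nonneg _, fun i => ?_, fun j => ?_⟩
  · have := congrFun (congrFun hQ' i) i
    simpa [Matrix.mul_apply, sq, Matrix.one_apply] using this
  · have := congrFun (congrFun hQ j) j
    simpa [Matrix.mul_apply, sq, Matrix.one_apply] using this

lemma permMatrix_orth (σ : Equiv.Perm (Fin n)) :
    (σ.permMatrix ℝ)ᵀ * (σ.permMatrix ℝ) = 1 := by
  ext j k
  simp only [Matrix.mul_apply, Matrix.transpose_apply, Equiv.Perm.permMatrix,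
    PEquiv.toMatrix_apply, Equiv.toPEquiv_apply, Option.mem_def, Option.some.injEq]
  rw [Equiv.sum_comp σ (fun i => (if i = j then (1:ℝ) else 0) * (if i = k then 1 else 0))]
  simp [Matrix.one_apply, ite_and, eq_comm]
end aux

theorem trace_max_at_permutation (n : ℕ) (a b : Fin n → ℝ) :
    ∃ (σ : Equiv.Perm (Fin n)) (P : Matrix (Fin n) (Fin n) ℝ),
      (∀ i j, P i j = if σ i = j then 1 else 0) ∧ Pᵀ * P = 1 ∧
      IsGreatest
        {x : ℝ | ∃ Q : Matrix (Fin n) (Fin n) ℝ, Qᵀ * Q = 1 ∧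
          x = Matrix.trace ((Matrix.diagonal a)ᵀ * Q * Matrix.diagonal b * Qᵀ)}
        (Matrix.trace ((Matrix.diagonal a)ᵀ * P * Matrix.diagonal b * Pᵀ)) := by
  obtain ⟨σ, hσ⟩ := Finite.exists_max (fun σ : Equiv.Perm (Fin n) => gfun a b (σ.permMatrix ℝ))
  refine ⟨σ, σ.permMatrix ℝ, fun i j => ?_, permMatrix_orth σ, ?_, ?_⟩
  · simp [Equiv.Perm.permMatrix, PEquiv.toMatrix_apply, Equiv.toPEquiv_apply]
  · exact ⟨σ.permMatrix ℝ, permMatrix_orth σ, rfl⟩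
  · rintro x ⟨Q, hQ, rfl⟩
    rw [trace_eq_gfun, trace_eq_gfun]
    have hperm : (fun i j => ((σ.permMatrix ℝ) i j)^2) = σ.permMatrix ℝ := by
      ext i j
      simp [Equiv.Perm.permMatrix, PEquiv.toMatrix_apply, Equiv.toPEquiv_apply, sq]
    rw [hperm]
    have hmem : (fun i j => (Q i j)^2) ∈ doublyStochastic ℝ (Fin n) := sq_mem_doublyStochastic hQ
    replace hmem : (Matrix.of fun i j => (Q i j)^2) ∈ convexHull ℝ {M | ∃ τ : Equiv.Perm (Fin n), τ.permMatrix ℝ = M} := by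
      rw [← doublyStochastic_eq_convexHull_permMatrix]; exact hmem
    have hconv : convexHull ℝ {M | ∃ τ : Equiv.Perm (Fin n), τ.permMatrix ℝ = M} ⊆
        {M | gfun a b M ≤ gfun a b (σ.permMatrix ℝ)} := by
      apply convexHull_min
      · rintro M ⟨τ, rfl⟩; exact hσ τ
      · exact convex_halfSpace_le (gfun_linear a b) _
    exact hconv hmem
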